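/- arXiv:2310.03546 — 2 statements merged into one kernel-verified Lean document; each statement's English description precedes it below -/
import Mathlib

section
/- For two probability measures π₁, π₂ on ℝ^d with fourth moments bounded by M₄, second moments by M₂, and first moments by M₁, the difference of the traces of their second moments satisfies |E_{π₁}[‖X‖²] - ‖E_{π₁}[X]‖² - E_{π₂}[‖Y‖²] + ‖E_{π₂}[Y]‖²| ≤ (√(2M₄) + 2√(2M₂)·M₁)·‖π₁ - π₂‖_TV^{1/2}. -/
open MeasureTheory
open scoped ENNReal

/-- Total variation distance, normalized as `sup_A |π₁(A) - π₂(A)|`. -/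
noncomputable def tvDist {α : Type*} [MeasurableSpace α] (π₁ π₂ : Measure α) : ℝ :=
  sSup {r | ∃ A : Set α, MeasurableSet A ∧ r = |(π₁ A).toReal - (π₂ A).toReal|}

set_option linter.unusedSectionVars false
set_option linter.unusedVariables false
set_option linter.deprecated false



section TV
variable {α : Type*} [MeasurableSpace α] (π₁ π₂ : Measure α)
  [IsProbabilityMeasure π₁] [IsProbabilityMeasure π₂]

lemma tv_mem_bddAbove : BddAbove {r | ∃ A : Set α, MeasurableSet A ∧ r = |(π₁ A).toReal - (π₂ A).toReal|} := by
  refine ⟨1, ?_⟩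
  rintro r ⟨A, hA, rfl⟩
  have h1 : (π₁ A).toReal ≤ 1 := by
    have := prob_le_one (μ := π₁) (s := A)
    simpa using ENNReal.toReal_mono ENNReal.one_ne_top this
  have h2 : (π₂ A).toReal ≤ 1 := by
    have := prob_le_one (μ := π₂) (s := A)
    simpa using ENNReal.toReal_mono ENNReal.one_ne_top this
  have h3 : (0:ℝ) ≤ (π₁ A).toReal := ENNReal.toReal_nonneg
  have h4 : (0:ℝ) ≤ (π₂ A).toReal := ENNReal.toReal_nonneg
  rw [abs_le]; constructor <;> linarith

lemma abs_measure_diff_le_tvDist {A : Set α} (hA : MeasurableSet A) :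
    |(π₁ A).toReal - (π₂ A).toReal| ≤ tvDist π₁ π₂ :=
  le_csSup (tv_mem_bddAbove π₁ π₂) ⟨A, hA, rfl⟩

lemma tvDist_nonneg : 0 ≤ tvDist π₁ π₂ :=
  le_trans (abs_nonneg _) (abs_measure_diff_le_tvDist π₁ π₂ MeasurableSet.empty)

lemma tvDist_comm : tvDist π₁ π₂ = tvDist π₂ π₁ := by
  unfold tvDist
  congr 1
  ext r
  constructor <;> rintro ⟨A, hA, rfl⟩ <;> exact ⟨A, hA, (abs_sub_comm _ _)⟩
end TV

lemma tv_one_sided {α : Type*} [MeasurableSpace α] (π₁ π₂ : Measure α)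
    [IsProbabilityMeasure π₁] [IsProbabilityMeasure π₂]
    {h : α → ℝ} (hm : Measurable h) (h0 : ∀ x, 0 ≤ h x)
    (hi1 : Integrable h π₁) (hi2 : Integrable h π₂)
    (hs1 : Integrable (fun x => h x ^ 2) π₁)
    {K : ℝ} (hK : 0 ≤ K) (hq1 : ∫ x, h x ^ 2 ∂π₁ ≤ K ^ 2) :
    ∫ x, h x ∂π₁ - ∫ x, h x ∂π₂ ≤ K * Real.sqrt (tvDist π₁ π₂) := by
  classical
  obtain ⟨s, hs, hsub, hsup⟩ := hahn_decomposition (μ := π₁) (ν := π₂)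
  set f : α → ℝ≥0∞ := fun x => ENNReal.ofReal (h x) with hf
  have hfm : Measurable f := hm.ennreal_ofReal
  -- restrict comparisons
  have hle : π₂.restrict s ≤ π₁.restrict s := by
    rw [Measure.le_iff]
    intro t ht
    rw [Measure.restrict_apply ht, Measure.restrict_apply ht]
    exact hsub _ (ht.inter hs) Set.inter_subset_right
  have hlec : π₁.restrict sᶜ ≤ π₂.restrict sᶜ := by
    rw [Measure.le_iff]
    intro t ht
    rw [Measure.restrict_apply ht, Measure.restrict_apply ht]
    exact hsup _ (ht.inter hs.compl) Set.inter_subset_right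
  set ρ : Measure α := π₁.restrict s - π₂.restrict s with hρ
  have hρ_add : ρ + π₂.restrict s = π₁.restrict s := Measure.sub_add_cancel_of_le hle
  have hρ_le : ρ ≤ π₁ := le_trans Measure.sub_le Measure.restrict_le_self
  -- lintegral decomposition
  have l1 : ∫⁻ x, f x ∂π₁ = ∫⁻ x, f x ∂ρ + ∫⁻ x, f x ∂(π₂.restrict s) + ∫⁻ x, f x ∂(π₁.restrict sᶜ) := by
    conv_lhs => rw [← Measure.restrict_add_restrict_compl (μ := π₁) hs]
    rw [lintegral_add_measure, ← hρ_add, lintegral_add_measure]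
  have l2 : ∫⁻ x, f x ∂π₂ = ∫⁻ x, f x ∂(π₂.restrict s) + ∫⁻ x, f x ∂(π₂.restrict sᶜ) := by
    conv_lhs => rw [← Measure.restrict_add_restrict_compl (μ := π₂) hs]
    rw [lintegral_add_measure]
  have lcomp : ∫⁻ x, f x ∂(π₁.restrict sᶜ) ≤ ∫⁻ x, f x ∂(π₂.restrict sᶜ) :=
    lintegral_mono' hlec le_rfl
  have lmain : ∫⁻ x, f x ∂π₁ ≤ ∫⁻ x, f x ∂ρ + ∫⁻ x, f x ∂π₂ := by
    rw [l1, l2]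
    calc ∫⁻ x, f x ∂ρ + ∫⁻ x, f x ∂(π₂.restrict s) + ∫⁻ x, f x ∂(π₁.restrict sᶜ)
        ≤ ∫⁻ x, f x ∂ρ + ∫⁻ x, f x ∂(π₂.restrict s) + ∫⁻ x, f x ∂(π₂.restrict sᶜ) := by
          gcongr
      _ = _ := by ring
  -- finiteness
  have fin2 : ∫⁻ x, f x ∂π₂ ≠ ⊤ := hi2.lintegral_lt_top.ne
  have finρ : ∫⁻ x, f x ∂ρ ≠ ⊤ :=
    (lt_of_le_of_lt (lintegral_mono' hρ_le le_rfl) hi1.lintegral_lt_top).ne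
  -- Cauchy-Schwarz on ρ
  have cs : ∫⁻ x, f x ∂ρ ≤ (ρ Set.univ) ^ ((1:ℝ)/2) * (∫⁻ x, f x ^ (2:ℕ) ∂ρ) ^ ((1:ℝ)/2) := by
    have hpq : Real.HolderConjugate 2 2 := by constructor <;> norm_num
    have := ENNReal.lintegral_mul_le_Lp_mul_Lq ρ hpq
      (f := fun _ => (1:ℝ≥0∞)) (g := f) aemeasurable_const hfm.aemeasurable
    simpa [ENNReal.rpow_two, sq] using this
  -- bound ρ univ
  have hρuniv : ρ Set.univ = π₁ s - π₂ s := by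
    rw [hρ, Measure.sub_apply MeasurableSet.univ hle,
      Measure.restrict_apply MeasurableSet.univ, Measure.restrict_apply MeasurableSet.univ,
      Set.univ_inter]
  have hρu_le : ρ Set.univ ≤ ENNReal.ofReal (tvDist π₁ π₂) := by
    rw [hρuniv]
    have hfin1 : π₁ s ≠ ⊤ := measure_ne_top _ _
    have hfin2 : π₂ s ≠ ⊤ := measure_ne_top _ _
    have h21 : π₂ s ≤ π₁ s := hsub s hs le_rfl
    have : (π₁ s - π₂ s).toReal ≤ tvDist π₁ π₂ := by
      rw [ENNReal.toReal_sub_of_le h21 hfin1]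
      calc (π₁ s).toReal - (π₂ s).toReal ≤ |(π₁ s).toReal - (π₂ s).toReal| := le_abs_self _
        _ ≤ _ := abs_measure_diff_le_tvDist π₁ π₂ hs
    calc π₁ s - π₂ s = ENNReal.ofReal ((π₁ s - π₂ s).toReal) := by
          rw [ENNReal.ofReal_toReal]; exact (lt_of_le_of_lt tsub_le_self hfin1.lt_top).ne
      _ ≤ ENNReal.ofReal (tvDist π₁ π₂) := ENNReal.ofReal_le_ofReal this
  have hsq : ∫⁻ x, f x ^ (2:ℕ) ∂ρ ≤ ENNReal.ofReal (K ^ 2) := by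
    have e1 : ∫⁻ x, f x ^ (2:ℕ) ∂ρ ≤ ∫⁻ x, f x ^ (2:ℕ) ∂π₁ := lintegral_mono' hρ_le le_rfl
    have e2 : ∫⁻ x, f x ^ (2:ℕ) ∂π₁ = ENNReal.ofReal (∫ x, h x ^ 2 ∂π₁) := by
      rw [ofReal_integral_eq_lintegral_ofReal hs1 (Filter.Eventually.of_forall fun x => sq_nonneg _)]
      exact lintegral_congr fun x => by rw [hf]; exact (ENNReal.ofReal_pow (h0 x) 2).symm
    rw [e2] at e1
    exact e1.trans (ENNReal.ofReal_le_ofReal hq1)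
  -- combine
  have cs2 : ∫⁻ x, f x ∂ρ ≤ ENNReal.ofReal (Real.sqrt (tvDist π₁ π₂) * K) := by
    have hK2 : ((K ^ 2 : ℝ)) ^ ((1:ℝ)/2) = K := by
      rw [← Real.sqrt_eq_rpow]; exact Real.sqrt_sq hK
    have htv : (tvDist π₁ π₂) ^ ((1:ℝ)/2) = Real.sqrt (tvDist π₁ π₂) :=
      (Real.sqrt_eq_rpow _).symm
    calc ∫⁻ x, f x ∂ρ ≤ (ρ Set.univ) ^ ((1:ℝ)/2) * (∫⁻ x, f x ^ (2:ℕ) ∂ρ) ^ ((1:ℝ)/2) := cs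
      _ ≤ (ENNReal.ofReal (tvDist π₁ π₂)) ^ ((1:ℝ)/2) * (ENNReal.ofReal (K ^ 2)) ^ ((1:ℝ)/2) := by
          gcongr
      _ = ENNReal.ofReal ((tvDist π₁ π₂) ^ ((1:ℝ)/2)) * ENNReal.ofReal ((K ^ 2) ^ ((1:ℝ)/2)) := by
          rw [ENNReal.ofReal_rpow_of_nonneg (tvDist_nonneg π₁ π₂) (by norm_num),
            ENNReal.ofReal_rpow_of_nonneg (sq_nonneg K) (by norm_num)]
      _ = ENNReal.ofReal (Real.sqrt (tvDist π₁ π₂) * K) := by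
          rw [hK2, htv, ← ENNReal.ofReal_mul (Real.sqrt_nonneg _)]
  -- back to real integrals
  have r1 : ∫ x, h x ∂π₁ = (∫⁻ x, f x ∂π₁).toReal := by
    rw [← ofReal_integral_eq_lintegral_ofReal hi1 (Filter.Eventually.of_forall h0),
      ENNReal.toReal_ofReal (integral_nonneg h0)]
  have r2 : ∫ x, h x ∂π₂ = (∫⁻ x, f x ∂π₂).toReal := by
    rw [← ofReal_integral_eq_lintegral_ofReal hi2 (Filter.Eventually.of_forall h0),
      ENNReal.toReal_ofReal (integral_nonneg h0)]
  rw [r1, r2]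
  have final : (∫⁻ x, f x ∂π₁).toReal ≤ (∫⁻ x, f x ∂ρ).toReal + (∫⁻ x, f x ∂π₂).toReal := by
    rw [← ENNReal.toReal_add finρ fin2]
    exact ENNReal.toReal_mono (by simp [ENNReal.add_ne_top, finρ, fin2]) lmain
  have hρr : (∫⁻ x, f x ∂ρ).toReal ≤ Real.sqrt (tvDist π₁ π₂) * K :=
    ENNReal.toReal_le_of_le_ofReal (by positivity) cs2
  linarith


lemma my_integral_cs {α : Type*} [MeasurableSpace α] (μ : Measure α) (u v : α → ℝ)
    (hu2 : Integrable (fun x => u x ^ 2) μ) (hv2 : Integrable (fun x => v x ^ 2) μ)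
    (huv : Integrable (fun x => u x * v x) μ) :
    (∫ x, u x * v x ∂μ) ^ 2 ≤ (∫ x, u x ^ 2 ∂μ) * (∫ x, v x ^ 2 ∂μ) := by
  have key : ∀ t : ℝ, 0 ≤ (∫ x, u x ^ 2 ∂μ) * (t * t) + (-2 * ∫ x, u x * v x ∂μ) * t
      + ∫ x, v x ^ 2 ∂μ := by
    intro t
    have h0 : 0 ≤ ∫ x, (t * u x - v x) ^ 2 ∂μ :=
      integral_nonneg fun x => sq_nonneg _
    have hexp : ∫ x, (t * u x - v x) ^ 2 ∂μ
        = (t * t) * ∫ x, u x ^ 2 ∂μ + ((-2 * t) * ∫ x, u x * v x ∂μ + ∫ x, v x ^ 2 ∂μ) := by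
      have e0 : ∫ x, (t * u x - v x) ^ 2 ∂μ
          = ∫ x, (t * t * u x ^ 2 + (-2 * t * (u x * v x) + v x ^ 2)) ∂μ :=
        integral_congr_ae (Filter.Eventually.of_forall fun x => by ring)
      have e1 : Integrable (fun x => -2 * t * (u x * v x) + v x ^ 2) μ :=
        (huv.const_mul _).add hv2
      have e2 : Integrable (fun x => t * t * u x ^ 2) μ := hu2.const_mul _
      have e3 : Integrable (fun x => -2 * t * (u x * v x)) μ := huv.const_mul _
      rw [e0, integral_add e2 e1, integral_add e3 hv2, integral_const_mul, integral_const_mul]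
    rw [hexp] at h0
    linarith
  have hd := discrim_le_zero key
  rw [discrim] at hd
  nlinarith [hd]

lemma sq_integral_le {α : Type*} [MeasurableSpace α] (μ : Measure α) [IsProbabilityMeasure μ]
    (v : α → ℝ) (hv : Integrable v μ) (hv2 : Integrable (fun x => v x ^ 2) μ) :
    (∫ x, v x ∂μ) ^ 2 ≤ ∫ x, v x ^ 2 ∂μ := by
  have := my_integral_cs μ (fun _ => (1:ℝ)) v (by simpa using integrable_const (1:ℝ))
    hv2 (by simpa using hv)
  simpa using this


variable {α : Type*} [MeasurableSpace α]

lemma integrable_norm_pow_of_memLp4 {E : Type*} [NormedAddCommGroup E]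
    {μ : Measure α} [IsFiniteMeasure μ] {f : α → E} (hL : MemLp f 4 μ)
    (k : ℕ) (hk : 1 ≤ k) (hk4 : k ≤ 4) :
    Integrable (fun x => ‖f x‖ ^ k) μ := by
  have hle : ((k : ℝ≥0∞)) ≤ 4 := by
    have : ((k:ℝ≥0∞)) ≤ ((4:ℕ):ℝ≥0∞) := by exact_mod_cast Nat.cast_le.mpr hk4
    simpa using this
  have hLk : MemLp f (k : ℝ≥0∞) μ := hL.mono_exponent hle
  have h0 : ((k : ℝ≥0∞)) ≠ 0 := by
    simp only [ne_eq, Nat.cast_eq_zero]; omega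
  have := hLk.integrable_norm_rpow h0 (by simp)
  simpa [Real.rpow_natCast] using this

section Euclid
variable {d : ℕ} (μ : Measure (EuclideanSpace ℝ (Fin d))) [IsProbabilityMeasure μ]

local notation "⟪" x ", " y "⟫" => @inner ℝ _ _ x y

lemma integral_norm_sub_sq (hL : MemLp (fun x => x) 4 μ) (c : EuclideanSpace ℝ (Fin d)) :
    ∫ x, ‖x - c‖ ^ 2 ∂μ = ∫ x, ‖x‖ ^ 2 ∂μ - 2 * ⟪(∫ x, x ∂μ), c⟫ + ‖c‖ ^ 2 := by
  have hi1 : Integrable (fun x : EuclideanSpace ℝ (Fin d) => x) μ :=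
    memLp_one_iff_integrable.mp (hL.mono_exponent (by norm_num))
  have hn2 : Integrable (fun x : EuclideanSpace ℝ (Fin d) => ‖x‖ ^ 2) μ :=
    integrable_norm_pow_of_memLp4 hL 2 (by norm_num) (by norm_num)
  have hinner : Integrable (fun x : EuclideanSpace ℝ (Fin d) => ⟪x, c⟫) μ :=
    hi1.inner_const c
  have e0 : ∫ x, ‖x - c‖ ^ 2 ∂μ = ∫ x, (‖x‖ ^ 2 + (-2 * ⟪x, c⟫ + ‖c‖ ^ 2)) ∂μ := by
    refine integral_congr_ae (Filter.Eventually.of_forall fun x => ?_)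
    have := norm_sub_sq_real x c
    show ‖x - c‖ ^ 2 = ‖x‖ ^ 2 + (-2 * ⟪x, c⟫ + ‖c‖ ^ 2)
    linarith
  have e1 : Integrable (fun x : EuclideanSpace ℝ (Fin d) => -2 * ⟪x, c⟫ + ‖c‖ ^ 2) μ :=
    (hinner.const_mul _).add (integrable_const _)
  have e3 : Integrable (fun x : EuclideanSpace ℝ (Fin d) => -2 * ⟪x, c⟫) μ := hinner.const_mul _
  rw [e0, integral_add hn2 e1, integral_add e3 (integrable_const _), integral_const_mul,
    integral_const]
  have : ∫ x, ⟪x, c⟫ ∂μ = ⟪(∫ x, x ∂μ), c⟫ := by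
    have := integral_inner (𝕜 := ℝ) hi1 c
    calc ∫ x, ⟪x, c⟫ ∂μ = ∫ x, ⟪c, x⟫ ∂μ :=
          integral_congr_ae (Filter.Eventually.of_forall fun x => real_inner_comm _ _)
      _ = ⟪c, (∫ x, x ∂μ)⟫ := this
      _ = _ := real_inner_comm _ _
  rw [this]
  simp [measure_univ]
  ring
end Euclid

section Moment
variable {d : ℕ} (μ : Measure (EuclideanSpace ℝ (Fin d))) [IsProbabilityMeasure μ]

lemma moment4_bound (hL : MemLp (fun x => x) 4 μ) (c : EuclideanSpace ℝ (Fin d))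
    {M₁ M₂ M₄ S : ℝ}
    (hγ1 : ‖c‖ ≤ M₁) (hγ2 : ‖c‖ ^ 2 ≤ M₂) (hγ3 : ‖c‖ ^ 3 ≤ S) (hγ4 : ‖c‖ ^ 4 ≤ M₄)
    (hS : 0 ≤ S)
    (h1 : ∫ x, ‖x‖ ∂μ ≤ M₁) (h2 : ∫ x, ‖x‖ ^ 2 ∂μ ≤ M₂)
    (h3 : ∫ x, ‖x‖ ^ 3 ∂μ ≤ S) (h4 : ∫ x, ‖x‖ ^ 4 ∂μ ≤ M₄) :
    ∫ x, ‖x - c‖ ^ 4 ∂μ ≤ 2 * M₄ + 8 * M₁ * S + 8 * M₁ ^ 2 * M₂ := by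
  set γ := ‖c‖ with hγ
  have hγ0 : 0 ≤ γ := norm_nonneg _
  have hM₁0 : 0 ≤ M₁ := le_trans hγ0 hγ1
  -- integrabilities
  have hLc : MemLp (fun x : EuclideanSpace ℝ (Fin d) => x - c) 4 μ := hL.sub (memLp_const c)
  have hi4c : Integrable (fun x : EuclideanSpace ℝ (Fin d) => ‖x - c‖ ^ 4) μ :=
    integrable_norm_pow_of_memLp4 hLc 4 (by norm_num) (by norm_num)
  have hi1 : Integrable (fun x : EuclideanSpace ℝ (Fin d) => ‖x‖) μ := by
    simpa using integrable_norm_pow_of_memLp4 hL 1 (by norm_num) (by norm_num)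
  have hi2 : Integrable (fun x : EuclideanSpace ℝ (Fin d) => ‖x‖ ^ 2) μ :=
    integrable_norm_pow_of_memLp4 hL 2 (by norm_num) (by norm_num)
  have hi3 : Integrable (fun x : EuclideanSpace ℝ (Fin d) => ‖x‖ ^ 3) μ :=
    integrable_norm_pow_of_memLp4 hL 3 (by norm_num) (by norm_num)
  have hi4 : Integrable (fun x : EuclideanSpace ℝ (Fin d) => ‖x‖ ^ 4) μ :=
    integrable_norm_pow_of_memLp4 hL 4 (by norm_num) (by norm_num)
  have e5 : Integrable (fun x : EuclideanSpace ℝ (Fin d) => 4 * γ ^ 3 * ‖x‖ + γ ^ 4) μ :=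
    (hi1.const_mul _).add (integrable_const _)
  have e6 : Integrable (fun x : EuclideanSpace ℝ (Fin d) =>
      6 * γ ^ 2 * ‖x‖ ^ 2 + (4 * γ ^ 3 * ‖x‖ + γ ^ 4)) μ := (hi2.const_mul _).add e5
  have e7 : Integrable (fun x : EuclideanSpace ℝ (Fin d) =>
      4 * γ * ‖x‖ ^ 3 + (6 * γ ^ 2 * ‖x‖ ^ 2 + (4 * γ ^ 3 * ‖x‖ + γ ^ 4))) μ :=
    (hi3.const_mul _).add e6
  have hg : Integrable (fun x : EuclideanSpace ℝ (Fin d) =>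
      ‖x‖ ^ 4 + (4 * γ * ‖x‖ ^ 3 + (6 * γ ^ 2 * ‖x‖ ^ 2 + (4 * γ ^ 3 * ‖x‖ + γ ^ 4)))) μ :=
    hi4.add e7
  have hmono : ∫ x, ‖x - c‖ ^ 4 ∂μ ≤ ∫ x, (‖x‖ ^ 4 + (4 * γ * ‖x‖ ^ 3 +
      (6 * γ ^ 2 * ‖x‖ ^ 2 + (4 * γ ^ 3 * ‖x‖ + γ ^ 4)))) ∂μ := by
    refine integral_mono hi4c hg fun x => ?_
    have hb : ‖x - c‖ ≤ ‖x‖ + γ := norm_sub_le _ _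
    have h4b : ‖x - c‖ ^ 4 ≤ (‖x‖ + γ) ^ 4 := by
      have := pow_le_pow_left₀ (norm_nonneg _) hb 4
      simpa using this
    show ‖x - c‖ ^ 4 ≤ ‖x‖ ^ 4 + (4 * γ * ‖x‖ ^ 3 + (6 * γ ^ 2 * ‖x‖ ^ 2 + (4 * γ ^ 3 * ‖x‖ + γ ^ 4)))
    calc ‖x - c‖ ^ 4 ≤ (‖x‖ + γ) ^ 4 := h4b
      _ = ‖x‖ ^ 4 + (4 * γ * ‖x‖ ^ 3 + (6 * γ ^ 2 * ‖x‖ ^ 2 + (4 * γ ^ 3 * ‖x‖ + γ ^ 4))) := by ring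
  have hsplit : ∫ x, (‖x‖ ^ 4 + (4 * γ * ‖x‖ ^ 3 + (6 * γ ^ 2 * ‖x‖ ^ 2 +
      (4 * γ ^ 3 * ‖x‖ + γ ^ 4)))) ∂μ
      = (∫ x, ‖x‖ ^ 4 ∂μ) + (4 * γ * ∫ x, ‖x‖ ^ 3 ∂μ) + (6 * γ ^ 2 * ∫ x, ‖x‖ ^ 2 ∂μ)
        + (4 * γ ^ 3 * ∫ x, ‖x‖ ∂μ) + γ ^ 4 := by
    rw [integral_add hi4 e7, integral_add (hi3.const_mul _) e6,
      integral_add (hi2.const_mul _) e5, integral_add (hi1.const_mul _) (integrable_const _),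
      integral_const_mul, integral_const_mul, integral_const_mul, integral_const]
    simp [measure_univ]
    ring
  -- nonnegativity of actual moments
  have n1 : 0 ≤ ∫ x, ‖x‖ ∂μ := integral_nonneg fun x => norm_nonneg _
  have n2 : 0 ≤ ∫ x, ‖x‖ ^ 2 ∂μ := integral_nonneg fun x => by positivity
  have n3 : 0 ≤ ∫ x, ‖x‖ ^ 3 ∂μ := integral_nonneg fun x => by positivity
  have n4 : 0 ≤ ∫ x, ‖x‖ ^ 4 ∂μ := integral_nonneg fun x => by positivity
  -- algebra
  have t1 : γ * ∫ x, ‖x‖ ^ 3 ∂μ ≤ M₁ * S := mul_le_mul hγ1 h3 n3 hM₁0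
  have t2 : γ ^ 3 * ∫ x, ‖x‖ ∂μ ≤ S * M₁ :=
    mul_le_mul hγ3 h1 n1 hS
  have t3 : γ ^ 2 * ∫ x, ‖x‖ ^ 2 ∂μ ≤ M₁ ^ 2 * M₂ := by
    have hγsq : γ ^ 2 ≤ M₁ ^ 2 := by nlinarith
    exact mul_le_mul hγsq h2 n2 (by positivity)
  have hM2 : 0 ≤ M₂ := le_trans n2 h2 |>.trans_eq rfl |> fun _ => le_trans n2 h2
  nlinarith [hmono, hsplit, t1, t2, t3, hγ4, h4, mul_nonneg (mul_nonneg hM₁0 hM₁0) (le_trans n2 h2)]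
end Moment


local notation "⟪" x ", " y "⟫" => @inner ℝ _ _ x y

theorem variance_diff_le_tv_sqrt {d : ℕ}
    (π₁ π₂ : Measure (EuclideanSpace ℝ (Fin d)))
    [IsProbabilityMeasure π₁] [IsProbabilityMeasure π₂] (M₁ M₂ M₄ : ℝ)
    (hL₁ : MemLp (fun x => x) 4 π₁) (hL₂ : MemLp (fun x => x) 4 π₂)
    (h1₁ : ∫ x, ‖x‖ ∂π₁ ≤ M₁) (h1₂ : ∫ x, ‖x‖ ∂π₂ ≤ M₁)
    (h2₁ : ∫ x, ‖x‖ ^ 2 ∂π₁ ≤ M₂) (h2₂ : ∫ x, ‖x‖ ^ 2 ∂π₂ ≤ M₂)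
    (h4₁ : ∫ x, ‖x‖ ^ 4 ∂π₁ ≤ M₄) (h4₂ : ∫ x, ‖x‖ ^ 4 ∂π₂ ≤ M₄) :
    |((∫ x, ‖x‖ ^ 2 ∂π₁) - ‖∫ x, x ∂π₁‖ ^ 2) - ((∫ y, ‖y‖ ^ 2 ∂π₂) - ‖∫ y, y ∂π₂‖ ^ 2)|
      ≤ (Real.sqrt (2 * M₄) + 2 * Real.sqrt (2 * M₂) * M₁) * Real.sqrt (tvDist π₁ π₂) := by
  classical
  set E := EuclideanSpace ℝ (Fin d)
  set m₁ : E := ∫ x, x ∂π₁ with hm₁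
  set m₂ : E := ∫ x, x ∂π₂ with hm₂
  set K : ℝ := Real.sqrt (2 * M₄) + 2 * Real.sqrt (2 * M₂) * M₁ with hKdef
  set S : ℝ := Real.sqrt (M₂ * M₄) with hSdef
  have hS0 : 0 ≤ S := Real.sqrt_nonneg _
  -- basic nonnegativity
  have hM₁0 : 0 ≤ M₁ := le_trans (integral_nonneg fun x => norm_nonneg _) h1₁
  have hM₂0 : 0 ≤ M₂ := le_trans (integral_nonneg fun x => by positivity) h2₁
  have hM₄0 : 0 ≤ M₄ := le_trans (integral_nonneg fun x => by positivity) h4₁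
  have hK0 : 0 ≤ K := by positivity
  -- K squared identity
  have hKsq : K ^ 2 = 2 * M₄ + 8 * M₁ * S + 8 * M₁ ^ 2 * M₂ := by
    have hcross : Real.sqrt (2 * M₄) * Real.sqrt (2 * M₂) = 2 * S := by
      rw [hSdef, ← Real.sqrt_mul (by linarith : (0:ℝ) ≤ 2 * M₄),
        show (2*M₄)*(2*M₂) = 2^2*(M₂*M₄) by ring, Real.sqrt_mul (by positivity),
        Real.sqrt_sq (by norm_num)]
    have h1 : Real.sqrt (2 * M₄) ^ 2 = 2 * M₄ := Real.sq_sqrt (by linarith)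
    have h2 : Real.sqrt (2 * M₂) ^ 2 = 2 * M₂ := Real.sq_sqrt (by linarith)
    calc K ^ 2 = Real.sqrt (2*M₄) ^ 2 + 4 * (Real.sqrt (2*M₄) * Real.sqrt (2*M₂)) * M₁
        + 4 * Real.sqrt (2*M₂) ^ 2 * M₁ ^ 2 := by rw [hKdef]; ring
      _ = 2 * M₄ + 8 * M₁ * S + 8 * M₁ ^ 2 * M₂ := by rw [hcross, h1, h2]; ring
  -- integrabilities for both measures
  have int_facts : ∀ (μ : Measure E) [IsProbabilityMeasure μ], MemLp (fun x : E => x) 4 μ →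
      Integrable (fun x : E => x) μ ∧ Integrable (fun x : E => ‖x‖) μ ∧
      Integrable (fun x : E => ‖x‖ ^ 2) μ ∧ Integrable (fun x : E => ‖x‖ ^ 3) μ ∧
      Integrable (fun x : E => ‖x‖ ^ 4) μ := by
    intro μ _ hL
    refine ⟨memLp_one_iff_integrable.mp (hL.mono_exponent (by norm_num)), ?_, ?_, ?_, ?_⟩
    · simpa using integrable_norm_pow_of_memLp4 hL 1 (by norm_num) (by norm_num)
    · exact integrable_norm_pow_of_memLp4 hL 2 (by norm_num) (by norm_num)
    · exact integrable_norm_pow_of_memLp4 hL 3 (by norm_num) (by norm_num)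
    · exact integrable_norm_pow_of_memLp4 hL 4 (by norm_num) (by norm_num)
  obtain ⟨ix₁, in₁1, in₁2, in₁3, in₁4⟩ := int_facts π₁ hL₁
  obtain ⟨ix₂, in₂1, in₂2, in₂3, in₂4⟩ := int_facts π₂ hL₂
  -- third moment bounds
  have third : ∀ (μ : Measure E) [IsProbabilityMeasure μ],
      Integrable (fun x : E => ‖x‖) μ → Integrable (fun x : E => ‖x‖ ^ 2) μ →
      Integrable (fun x : E => ‖x‖ ^ 3) μ → Integrable (fun x : E => ‖x‖ ^ 4) μ →
      (∫ x, ‖x‖ ^ 2 ∂μ ≤ M₂) → (∫ x, ‖x‖ ^ 4 ∂μ ≤ M₄) → ∫ x, ‖x‖ ^ 3 ∂μ ≤ S := by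
    intro μ _ i1 i2 i3 i4 b2 b4
    have hcs := my_integral_cs μ (fun x => ‖x‖) (fun x => ‖x‖ ^ 2) i2
      (i4.congr (Filter.Eventually.of_forall fun x => by ring)) 
      (i3.congr (Filter.Eventually.of_forall fun x => by ring))
    have e1 : ∫ x, ‖x‖ * ‖x‖ ^ 2 ∂μ = ∫ x, ‖x‖ ^ 3 ∂μ :=
      integral_congr_ae (Filter.Eventually.of_forall fun x => by ring)
    have e2 : ∫ x, (‖x‖ ^ 2) ^ 2 ∂μ = ∫ x, ‖x‖ ^ 4 ∂μ :=
      integral_congr_ae (Filter.Eventually.of_forall fun x => by ring)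
    rw [e1, e2] at hcs
    have n2 : 0 ≤ ∫ x, ‖x‖ ^ 2 ∂μ := integral_nonneg fun x => by positivity
    have n3 : 0 ≤ ∫ x, ‖x‖ ^ 3 ∂μ := integral_nonneg fun x => by positivity
    rw [hSdef, Real.le_sqrt n3 (by positivity)]
    calc (∫ x, ‖x‖ ^ 3 ∂μ) ^ 2 ≤ (∫ x, ‖x‖ ^ 2 ∂μ) * (∫ x, ‖x‖ ^ 4 ∂μ) := hcs
      _ ≤ M₂ * M₄ := by
          have n4 : 0 ≤ ∫ x, ‖x‖ ^ 4 ∂μ := integral_nonneg fun x => by positivity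
          exact mul_le_mul b2 b4 n4 hM₂0
  have third₁ := third π₁ in₁1 in₁2 in₁3 in₁4 h2₁ h4₁
  have third₂ := third π₂ in₂1 in₂2 in₂3 in₂4 h2₂ h4₂
  -- mean norm facts
  have mean_facts : ∀ (μ : Measure E) [IsProbabilityMeasure μ],
      Integrable (fun x : E => x) μ → Integrable (fun x : E => ‖x‖) μ →
      Integrable (fun x : E => ‖x‖ ^ 2) μ → Integrable (fun x : E => ‖x‖ ^ 4) μ →
      (∫ x, ‖x‖ ∂μ ≤ M₁) → (∫ x, ‖x‖ ^ 2 ∂μ ≤ M₂) → (∫ x, ‖x‖ ^ 4 ∂μ ≤ M₄) →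
      ‖∫ x, x ∂μ‖ ≤ M₁ ∧ ‖∫ x, x ∂μ‖ ^ 2 ≤ M₂ ∧ ‖∫ x, x ∂μ‖ ^ 3 ≤ S ∧
        ‖∫ x, x ∂μ‖ ^ 4 ≤ M₄ := by
    intro μ _ ix i1 i2 i4 b1 b2 b4
    set γ := ‖∫ x, x ∂μ‖ with hγv
    have hγ0 : 0 ≤ γ := norm_nonneg _
    have hA1 : γ ≤ ∫ x, ‖x‖ ∂μ := norm_integral_le_integral_norm _
    have hg1 : γ ≤ M₁ := hA1.trans b1
    have hsq1 : (∫ x, ‖x‖ ∂μ) ^ 2 ≤ ∫ x, ‖x‖ ^ 2 ∂μ := by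
      have := sq_integral_le μ (fun x => ‖x‖) i1 i2
      simpa using this
    have hγ2' : γ ^ 2 ≤ ∫ x, ‖x‖ ^ 2 ∂μ := by
      have : γ ^ 2 ≤ (∫ x, ‖x‖ ∂μ) ^ 2 :=
        pow_le_pow_left₀ hγ0 hA1 2
      linarith
    have hg2 : γ ^ 2 ≤ M₂ := hγ2'.trans b2
    have hsq2 : (∫ x, ‖x‖ ^ 2 ∂μ) ^ 2 ≤ ∫ x, ‖x‖ ^ 4 ∂μ := by
      have := sq_integral_le μ (fun x => ‖x‖ ^ 2) i2
        (i4.congr (Filter.Eventually.of_forall fun x => by ring))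
      have e : ∫ x, (‖x‖ ^ 2) ^ 2 ∂μ = ∫ x, ‖x‖ ^ 4 ∂μ :=
        integral_congr_ae (Filter.Eventually.of_forall fun x => by ring)
      rw [e] at this
      exact this
    have n2 : 0 ≤ ∫ x, ‖x‖ ^ 2 ∂μ := integral_nonneg fun x => by positivity
    have hg4 : γ ^ 4 ≤ M₄ := by
      have h1 : γ ^ 4 ≤ (∫ x, ‖x‖ ^ 2 ∂μ) ^ 2 := by nlinarith
      exact h1.trans (hsq2.trans b4)
    have hg3 : γ ^ 3 ≤ S := by
      rw [hSdef, Real.le_sqrt (by positivity) (by positivity)]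
      calc (γ ^ 3) ^ 2 = γ ^ 2 * γ ^ 4 := by ring
        _ ≤ M₂ * M₄ := mul_le_mul hg2 hg4 (by positivity) hM₂0
    exact ⟨hg1, hg2, hg3, hg4⟩
  obtain ⟨g1₁, g2₁, g3₁, g4₁⟩ := mean_facts π₁ ix₁ in₁1 in₁2 in₁4 h1₁ h2₁ h4₁
  obtain ⟨g1₂, g2₂, g3₂, g4₂⟩ := mean_facts π₂ ix₂ in₂1 in₂2 in₂4 h1₂ h2₂ h4₂
  -- fourth moment bounds for shifted functions
  have mb : ∀ (μ : Measure E) [IsProbabilityMeasure μ] (hL : MemLp (fun x : E => x) 4 μ)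
      (c : E), ‖c‖ ≤ M₁ → ‖c‖ ^ 2 ≤ M₂ → ‖c‖ ^ 3 ≤ S → ‖c‖ ^ 4 ≤ M₄ →
      (∫ x, ‖x‖ ∂μ ≤ M₁) → (∫ x, ‖x‖ ^ 2 ∂μ ≤ M₂) → (∫ x, ‖x‖ ^ 3 ∂μ ≤ S) →
      (∫ x, ‖x‖ ^ 4 ∂μ ≤ M₄) →
      ∫ x, (‖x - c‖ ^ 2) ^ 2 ∂μ ≤ K ^ 2 := by
    intro μ _ hL c hc1 hc2 hc3 hc4 b1 b2 b3 b4
    have e : ∫ x, (‖x - c‖ ^ 2) ^ 2 ∂μ = ∫ x, ‖x - c‖ ^ 4 ∂μ :=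
      integral_congr_ae (Filter.Eventually.of_forall fun x => by ring)
    rw [e, hKsq]
    exact moment4_bound μ hL c hc1 hc2 hc3 hc4 hS0 b1 b2 b3 b4
  -- integrability of shifted squares
  have ints : ∀ (μ : Measure E) [IsProbabilityMeasure μ] (hL : MemLp (fun x : E => x) 4 μ)
      (c : E), Integrable (fun x : E => ‖x - c‖ ^ 2) μ ∧
        Integrable (fun x : E => (‖x - c‖ ^ 2) ^ 2) μ := by
    intro μ _ hL c
    have hLc : MemLp (fun x : E => x - c) 4 μ := hL.sub (memLp_const c)
    constructor
    · exact integrable_norm_pow_of_memLp4 hLc 2 (by norm_num) (by norm_num)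
    · exact (integrable_norm_pow_of_memLp4 hLc 4 (by norm_num) (by norm_num)).congr
        (Filter.Eventually.of_forall fun x => by ring)
  obtain ⟨i11, i11'⟩ := ints π₁ hL₁ m₁
  obtain ⟨i21, i21'⟩ := ints π₂ hL₂ m₁
  obtain ⟨i12, i12'⟩ := ints π₁ hL₁ m₂
  obtain ⟨i22, i22'⟩ := ints π₂ hL₂ m₂
  -- measurability / nonnegativity of h functions
  have hmeas : ∀ c : E, Measurable (fun x : E => ‖x - c‖ ^ 2) := fun c =>
    ((continuous_id.sub continuous_const).norm.pow 2).measurable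
  have hpos : ∀ (c : E) (x : E), 0 ≤ ‖x - c‖ ^ 2 := fun c x => by positivity
  -- the two one-sided bounds
  have bound2 : ∫ x, ‖x - m₂‖ ^ 2 ∂π₁ - ∫ x, ‖x - m₂‖ ^ 2 ∂π₂ ≤ K * Real.sqrt (tvDist π₁ π₂) :=
    tv_one_sided π₁ π₂ (hmeas m₂) (hpos m₂) i12 i22 i12' hK0
      (mb π₁ hL₁ m₂ g1₂ g2₂ g3₂ g4₂ h1₁ h2₁ third₁ h4₁)
  have bound1 : ∫ x, ‖x - m₁‖ ^ 2 ∂π₂ - ∫ x, ‖x - m₁‖ ^ 2 ∂π₁ ≤ K * Real.sqrt (tvDist π₁ π₂) := by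
    have := tv_one_sided π₂ π₁ (hmeas m₁) (hpos m₁) i21 i11 i21' hK0
      (mb π₂ hL₂ m₁ g1₁ g2₁ g3₁ g4₁ h1₂ h2₂ third₂ h4₂)
    rwa [tvDist_comm π₂ π₁] at this
  -- expansion identities
  have ex11 := integral_norm_sub_sq π₁ hL₁ m₁
  have ex12 := integral_norm_sub_sq π₁ hL₁ m₂
  have ex21 := integral_norm_sub_sq π₂ hL₂ m₁
  have ex22 := integral_norm_sub_sq π₂ hL₂ m₂
  have inns1 : ⟪m₁, m₁⟫ = ‖m₁‖ ^ 2 := real_inner_self_eq_norm_sq m₁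
  have inns2 : ⟪m₂, m₂⟫ = ‖m₂‖ ^ 2 := real_inner_self_eq_norm_sq m₂
  have icomm : ⟪m₁, m₂⟫ = ⟪m₂, m₁⟫ := real_inner_comm _ _
  have hns : ‖m₁ - m₂‖ ^ 2 = ‖m₁‖ ^ 2 - 2 * ⟪m₁, m₂⟫ + ‖m₂‖ ^ 2 := norm_sub_sq_real m₁ m₂
  have hd0 : 0 ≤ ‖m₁ - m₂‖ ^ 2 := by positivity
  rw [abs_le]
  constructor
  · linarith [bound1, ex11, ex21, hns, inns1, inns2, icomm, hd0]
  · linarith [bound2, ex12, ex22, hns, inns1, inns2, icomm, hd0]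
end

section
/- Tweedie's formula: let p be a probability density on ℝ^d with finite first moment, and let p_ε(z) = ∫ p(x)·(2πε²)^{-d/2}·exp(-‖z-x‖²/(2ε²)) dx be its Gaussian smoothing. Then ∇ log p_ε(z) = (D_ε(z) - z)/ε², where D_ε(z) = ∫ x·p(x)·exp(-‖z-x‖²/(2ε²)) dx / ∫ p(x)·exp(-‖z-x‖²/(2ε²)) dx is the MMSE denoiser (posterior mean of x given z = x + ε·noise). -/
set_option maxHeartbeats 1000000
set_option synthInstance.maxHeartbeats 1000000


open MeasureTheory RealInnerProductSpace

/-- Gaussian smoothing of a density `p` at noise level `ε`. -/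
noncomputable def smoothedDensity {d : ℕ} (p : EuclideanSpace ℝ (Fin d) → ℝ) (ε : ℝ)
    (z : EuclideanSpace ℝ (Fin d)) : ℝ :=
  ∫ x, p x * ((2 * Real.pi * ε ^ 2) ^ (-(d : ℝ) / 2) * Real.exp (-‖z - x‖ ^ 2 / (2 * ε ^ 2)))

/-- The MMSE denoiser: posterior mean of `x` given `z = x + ε · noise`. -/
noncomputable def mmseDenoiser {d : ℕ} (p : EuclideanSpace ℝ (Fin d) → ℝ) (ε : ℝ)
    (z : EuclideanSpace ℝ (Fin d)) : EuclideanSpace ℝ (Fin d) :=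
  (∫ x, p x * Real.exp (-‖z - x‖ ^ 2 / (2 * ε ^ 2)))⁻¹ •
    ∫ x, (p x * Real.exp (-‖z - x‖ ^ 2 / (2 * ε ^ 2))) • x

variable {d : ℕ}
local notation "E" => EuclideanSpace ℝ (Fin d)

lemma tw_exp_deriv (ε : ℝ) (hε : 0 < ε) (x w : E) :
    HasFDerivAt (fun w : E => Real.exp (-‖w - x‖ ^ 2 / (2 * ε ^ 2)))
      ((Real.exp (-‖w - x‖ ^ 2 / (2 * ε ^ 2)) * (ε ^ 2)⁻¹) • innerSL ℝ (x - w)) w := by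
  have h1 : HasFDerivAt (fun w : E => ‖w - x‖ ^ 2) (2 • innerSL ℝ (w - x)) w := by
    simpa using ((hasFDerivAt_id w).sub_const x).norm_sq
  have h2 := (h1.const_mul (-(2 * ε ^ 2)⁻¹)).exp
  have hfun : (fun w : E => Real.exp (-‖w - x‖ ^ 2 / (2 * ε ^ 2)))
      = fun w : E => Real.exp (-(2 * ε ^ 2)⁻¹ * ‖w - x‖ ^ 2) := by
    funext w; ring_nf
  rw [hfun]
  convert h2 using 1
  on_goal 1 => rfl
  ext y
  have hsub : (x : E) - w = -(w - x) := (neg_sub _ _).symm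
  simp only [ContinuousLinearMap.smul_apply, smul_eq_mul, innerSL_apply_apply, hsub,
    inner_neg_left]
  rw [show -‖w - x‖ ^ 2 / (2 * ε ^ 2) = -(2 * ε ^ 2)⁻¹ * ‖w - x‖ ^ 2 by ring]
  generalize ⟪w - x, y⟫ = r
  have hε2 : (ε : ℝ) ^ 2 ≠ 0 := by positivity
  field_simp
  ring


/-- Tweedie's formula. -/
theorem tweedie_formula {d : ℕ} (p : EuclideanSpace ℝ (Fin d) → ℝ) (ε : ℝ) (hε : 0 < ε)
    (hmeas : Measurable p) (hnonneg : ∀ x, 0 ≤ p x)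
    (hint : Integrable p) (hnorm : ∫ x, p x = 1)
    (hmom : Integrable (fun x => ‖x‖ * p x)) :
    ∀ z, gradient (fun w => Real.log (smoothedDensity p ε w)) z
      = (ε ^ 2)⁻¹ • (mmseDenoiser p ε z - z) := by
  intro z
  have hε2 : (0:ℝ) < ε ^ 2 := by positivity
  set c : EuclideanSpace ℝ (Fin d) → ℝ := fun x => p x * Real.exp (-‖z - x‖ ^ 2 / (2 * ε ^ 2))
    with hc
  have hcont : ∀ w : (EuclideanSpace ℝ (Fin d)), Continuous fun x : (EuclideanSpace ℝ (Fin d)) => Real.exp (-‖w - x‖ ^ 2 / (2 * ε ^ 2)) :=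
    fun w => Real.continuous_exp.comp
      (((continuous_const.sub continuous_id).norm.pow 2).neg.div_const (2 * ε ^ 2))
  have hexpnn : ∀ w x : (EuclideanSpace ℝ (Fin d)), 0 < Real.exp (-‖w - x‖ ^ 2 / (2 * ε ^ 2)) := fun _ _ => Real.exp_pos _
  have hexple : ∀ w x : (EuclideanSpace ℝ (Fin d)), Real.exp (-‖w - x‖ ^ 2 / (2 * ε ^ 2)) ≤ 1 := fun w x =>
    Real.exp_le_one_iff.mpr
      (div_nonpos_of_nonpos_of_nonneg (neg_nonpos.mpr (by positivity)) (by positivity))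
  have hcint : ∀ w : (EuclideanSpace ℝ (Fin d)), Integrable (fun x : (EuclideanSpace ℝ (Fin d)) => p x * Real.exp (-‖w - x‖ ^ 2 / (2 * ε ^ 2))) := by
    intro w
    refine hint.mono' ((hmeas.aestronglyMeasurable).mul (hcont w).aestronglyMeasurable)
      (Filter.Eventually.of_forall fun x => ?_)
    rw [Real.norm_eq_abs, abs_of_nonneg (mul_nonneg (hnonneg x) (hexpnn w x).le)]
    calc p x * Real.exp (-‖w - x‖ ^ 2 / (2 * ε ^ 2)) ≤ p x * 1 :=
          mul_le_mul_of_nonneg_left (hexple w x) (hnonneg x)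
      _ = p x := mul_one _
  have hgpos : ∀ w : (EuclideanSpace ℝ (Fin d)), 0 < ∫ x, p x * Real.exp (-‖w - x‖ ^ 2 / (2 * ε ^ 2)) := by
    intro w
    rcases lt_or_eq_of_le (integral_nonneg (f := fun x => p x * Real.exp (-‖w - x‖ ^ 2 / (2 * ε ^ 2))) fun x => mul_nonneg (hnonneg x) (hexpnn w x).le)
      with h | h
    · exact h
    · exfalso
      have h0 : (fun x : (EuclideanSpace ℝ (Fin d)) => p x * Real.exp (-‖w - x‖ ^ 2 / (2 * ε ^ 2))) =ᵐ[volume] 0 :=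
        (integral_eq_zero_iff_of_nonneg (fun x => mul_nonneg (hnonneg x) (hexpnn w x).le)
          (hcint w)).mp h.symm
      have hp0 : p =ᵐ[volume] 0 := by
        filter_upwards [h0] with x hx
        rcases mul_eq_zero.mp hx with h | h
        · exact h
        · exact absurd h (hexpnn w x).ne'
      have : (1:ℝ) = 0 := by rw [← hnorm, integral_congr_ae hp0]; simp
      norm_num at this
  have hcxint : Integrable (fun x : (EuclideanSpace ℝ (Fin d)) => c x • x) := by
    refine hmom.mono' (((hmeas.aestronglyMeasurable).mul
        (hcont z).aestronglyMeasurable).smul aestronglyMeasurable_id)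
      (Filter.Eventually.of_forall fun x => ?_)
    rw [norm_smul, Real.norm_eq_abs, abs_of_nonneg (mul_nonneg (hnonneg x) (hexpnn z x).le)]
    calc p x * Real.exp (-‖z - x‖ ^ 2 / (2 * ε ^ 2)) * ‖x‖ ≤ p x * 1 * ‖x‖ := by
          gcongr; exacts [hnonneg x, hexple z x]
      _ = ‖x‖ * p x := by ring
  -- derivative of the unnormalized smoothed density via dominated convergence
  have hbound_int : Integrable (fun x : (EuclideanSpace ℝ (Fin d)) =>
      (ε ^ 2)⁻¹ * (‖x‖ * p x) + ((ε ^ 2)⁻¹ * (‖z‖ + 1)) * p x) :=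
    (hmom.const_mul _).add (hint.const_mul _)
  have hderiv : HasFDerivAt (fun w : (EuclideanSpace ℝ (Fin d)) => ∫ x, p x * Real.exp (-‖w - x‖ ^ 2 / (2 * ε ^ 2)))
      (∫ x, (p x * Real.exp (-‖z - x‖ ^ 2 / (2 * ε ^ 2)) * (ε ^ 2)⁻¹) • innerSL ℝ (x - z)) z := by
    apply hasFDerivAt_integral_of_dominated_of_fderiv_le (𝕜 := ℝ)
      (F' := fun (w : (EuclideanSpace ℝ (Fin d))) (x : (EuclideanSpace ℝ (Fin d))) =>
        (p x * Real.exp (-‖w - x‖ ^ 2 / (2 * ε ^ 2)) * (ε ^ 2)⁻¹) • innerSL ℝ (x - w))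
      (bound := fun x : (EuclideanSpace ℝ (Fin d)) => (ε ^ 2)⁻¹ * (‖x‖ * p x) + ((ε ^ 2)⁻¹ * (‖z‖ + 1)) * p x)
      (Metric.ball_mem_nhds z zero_lt_one)
    · exact Filter.Eventually.of_forall fun w =>
        ((hmeas.aestronglyMeasurable).mul (hcont w).aestronglyMeasurable)
    · exact hcint z
    · exact (((hmeas.aestronglyMeasurable).mul (hcont z).aestronglyMeasurable).mul
        aestronglyMeasurable_const).smul
        ((innerSL ℝ).continuous.comp (continuous_id.sub continuous_const)).aestronglyMeasurable
    · refine Filter.Eventually.of_forall fun x => fun w hw => ?_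
      refine le_trans (norm_smul_le (β := EuclideanSpace ℝ (Fin d) →L[ℝ] ℝ) _ _) ?_
      rw [innerSL_apply_norm, Real.norm_eq_abs,
        abs_of_nonneg (mul_nonneg (mul_nonneg (hnonneg x) (hexpnn w x).le) (by positivity))]
      have h3 : ‖w - z‖ < 1 := by simpa [dist_eq_norm] using Metric.mem_ball.mp hw
      have h2 : ‖w‖ ≤ ‖w - z‖ + ‖z‖ := by simpa using norm_add_le (w - z) z
      have hxw : ‖x - w‖ ≤ ‖x‖ + (‖z‖ + 1) := (norm_sub_le _ _).trans (by linarith)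
      have hp1k : 0 ≤ p x * 1 * (ε ^ 2)⁻¹ :=
        mul_nonneg (mul_nonneg (hnonneg x) one_pos.le) (by positivity)
      calc p x * Real.exp (-‖w - x‖ ^ 2 / (2 * ε ^ 2)) * (ε ^ 2)⁻¹ * ‖x - w‖
          ≤ p x * 1 * (ε ^ 2)⁻¹ * (‖x‖ + (‖z‖ + 1)) :=
            mul_le_mul (mul_le_mul_of_nonneg_right
              (mul_le_mul_of_nonneg_left (hexple w x) (hnonneg x)) (by positivity))
              hxw (norm_nonneg _) hp1k
        _ = (ε ^ 2)⁻¹ * (‖x‖ * p x) + ((ε ^ 2)⁻¹ * (‖z‖ + 1)) * p x := by ring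
    · exact hbound_int
    · refine Filter.Eventually.of_forall fun x => fun w hw => ?_
      have h4 := (tw_exp_deriv ε hε x w).const_mul (p x)
      convert h4 using 1
      on_goal 1 => rfl
      ext y
      simp only [ContinuousLinearMap.smul_apply, smul_eq_mul]
      ring
  -- rewrite the derivative integral as an inner product with a vector
  have hvint : Integrable (fun x : (EuclideanSpace ℝ (Fin d)) => (c x * (ε ^ 2)⁻¹) • (x - z)) := by
    have h5 : Integrable (fun x : (EuclideanSpace ℝ (Fin d)) => (ε ^ 2)⁻¹ • (c x • x) - ((ε ^ 2)⁻¹ * c x) • z) :=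
      ((hcxint.smul ((ε ^ 2)⁻¹ : ℝ))).sub (((hcint z).const_mul _).smul_const z)
    refine h5.congr (Filter.Eventually.of_forall fun x => ?_)
    module
  set v : EuclideanSpace ℝ (Fin d) := ∫ x, (c x * (ε ^ 2)⁻¹) • (x - z) with hv
  have hint2 : (∫ x, (p x * Real.exp (-‖z - x‖ ^ 2 / (2 * ε ^ 2)) * (ε ^ 2)⁻¹) •
      innerSL ℝ (x - z)) = innerSL ℝ v := by
    rw [hv, ← (innerSL ℝ).integral_comp_comm hvint]
    refine integral_congr_ae (Filter.Eventually.of_forall fun x => ?_)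
    simp only [_root_.map_smul]
    rfl
  -- log of the smoothed density
  set C : ℝ := (2 * Real.pi * ε ^ 2) ^ (-(d:ℝ)/2) with hC
  have hCpos : 0 < C := Real.rpow_pos_of_pos (by positivity) _
  have hS : ∀ w : (EuclideanSpace ℝ (Fin d)), smoothedDensity p ε w
      = C * ∫ x, p x * Real.exp (-‖w - x‖ ^ 2 / (2 * ε ^ 2)) := by
    intro w
    rw [smoothedDensity, ← integral_const_mul]
    exact integral_congr_ae (Filter.Eventually.of_forall fun x => by ring)
  have hfun : (fun w : (EuclideanSpace ℝ (Fin d)) => Real.log (smoothedDensity p ε w))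
      = fun w : (EuclideanSpace ℝ (Fin d)) => Real.log C + Real.log (∫ x, p x * Real.exp (-‖w - x‖ ^ 2 / (2 * ε ^ 2))) := by
    funext w
    rw [hS w, Real.log_mul hCpos.ne' (hgpos w).ne']
  rw [hfun]
  have hlog := (hderiv.log (hgpos z).ne').const_add (Real.log C)
  rw [hint2] at hlog
  have hdual : InnerProductSpace.toDual ℝ (EuclideanSpace ℝ (Fin d))
      ((∫ x, c x)⁻¹ • v) = (∫ x, c x)⁻¹ • innerSL ℝ v := by
    ext y
    simp [InnerProductSpace.toDual_apply_apply, real_inner_smul_left]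
  have hga : HasGradientAt (fun w : (EuclideanSpace ℝ (Fin d)) =>
      Real.log C + Real.log (∫ x, p x * Real.exp (-‖w - x‖ ^ 2 / (2 * ε ^ 2))))
      ((∫ x, c x)⁻¹ • v) z := by
    rw [hasGradientAt_iff_hasFDerivAt, hdual]
    exact hlog
  rw [hga.gradient]
  -- final algebra
  have hgne : (∫ x, c x) ≠ 0 := (hgpos z).ne'
  have hv2 : v = (ε ^ 2)⁻¹ • ((∫ x, c x • x) - (∫ x, c x) • z) := by
    rw [hv]
    calc (∫ x, (c x * (ε ^ 2)⁻¹) • (x - z))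
        = ∫ x, ((ε ^ 2)⁻¹ • (c x • x) - ((ε ^ 2)⁻¹ * c x) • z) :=
          integral_congr_ae (Filter.Eventually.of_forall fun x => by module)
      _ = (ε ^ 2)⁻¹ • (∫ x, c x • x) - ((ε ^ 2)⁻¹ * ∫ x, c x) • z := by
          have hint_a : Integrable (fun x : (EuclideanSpace ℝ (Fin d)) => (ε ^ 2)⁻¹ • (c x • x)) := hcxint.smul ((ε ^ 2)⁻¹ : ℝ)
          have hint_b : Integrable (fun x : (EuclideanSpace ℝ (Fin d)) => ((ε ^ 2)⁻¹ * c x) • z) :=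
            ((hcint z).const_mul _).smul_const z
          rw [integral_sub hint_a hint_b, integral_smul, integral_smul_const,
            integral_const_mul]
      _ = (ε ^ 2)⁻¹ • ((∫ x, c x • x) - (∫ x, c x) • z) := by module
  have hmm : mmseDenoiser p ε z = (∫ x, c x)⁻¹ • ∫ x, c x • x := rfl
  rw [hv2, hmm, smul_comm, smul_sub, smul_smul, inv_mul_cancel₀ hgne, one_smul]
end
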